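/- Let τ > 0, let w ∈ ℝ^p with w_k ≥ 0 for all k, and let s ∈ ℝ^p satisfy s_k ≤ z_k(x) for all x ∈ X and all k. If x̄ ∈ X minimizes the augmented weighted Tchebycheff scalarization x ↦ max_{k=1,…,p} w_k (z_k(x) − s_k) + τ Σ_{k=1}^p (z_k(x) − s_k) over X, then x̄ is efficient. -/
import Mathlib


/-- Let `τ > 0`, `w_k ≥ 0` for all `k`, and `s_k ≤ z_k(x)` for all `x ∈ X`
and all `k`.  If `x̄ ∈ X` minimizes the augmented weighted Tchebycheff scalarization
`x ↦ max_k w_k (z_k(x) - s_k) + τ Σ_k (z_k(x) - s_k)` over `X`, then `x̄` is efficient. -/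
theorem augmented_weighted_tchebycheff_optimal_is_efficient {α : Type*}
    (X : Finset α) (hX : X.Nonempty) (p : ℕ) (hp : 2 ≤ p)
    (z : α → Fin p → ℝ) (τ : ℝ) (hτ : 0 < τ)
    (w : Fin p → ℝ) (hw : ∀ k, 0 ≤ w k)
    (s : Fin p → ℝ) (hs : ∀ x ∈ X, ∀ k, s k ≤ z x k)
    (xbar : α) (hxbar : xbar ∈ X)
    (hopt : ∀ x ∈ X,
      (Finset.univ.sup' (Finset.univ_nonempty_iff.mpr ⟨⟨0, by omega⟩⟩)
        fun k => w k * (z xbar k - s k)) + τ * ∑ k, (z xbar k - s k) ≤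
      (Finset.univ.sup' (Finset.univ_nonempty_iff.mpr ⟨⟨0, by omega⟩⟩)
        fun k => w k * (z x k - s k)) + τ * ∑ k, (z x k - s k)) :
    ¬ ∃ xhat ∈ X, (∀ k, z xhat k ≤ z xbar k) ∧ z xhat ≠ z xbar := by
  rintro ⟨xhat, hxh, hle, hne⟩
  have hsum : ∑ k, (z xhat k - s k) < ∑ k, (z xbar k - s k) := by
    apply Finset.sum_lt_sum
    · intro k _; linarith [hle k]
    · obtain ⟨k, hk⟩ : ∃ k, z xhat k ≠ z xbar k := by
        by_contra h; push_neg at h; exact hne (funext h)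
      exact ⟨k, Finset.mem_univ k, by have := lt_of_le_of_ne (hle k) hk; linarith⟩
  have hsup : (Finset.univ.sup' (Finset.univ_nonempty_iff.mpr ⟨⟨0, by omega⟩⟩)
        fun k => w k * (z xhat k - s k)) ≤
      (Finset.univ.sup' (Finset.univ_nonempty_iff.mpr ⟨⟨0, by omega⟩⟩)
        fun k => w k * (z xbar k - s k)) := by
    apply Finset.sup'_mono_fun
    intro k _
    exact mul_le_mul_of_nonneg_left (by linarith [hle k]) (hw k)
  have := hopt xhat hxh
  nlinarith
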